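/- arXiv:math/0505214 — 2 statements merged into one kernel-verified Lean document; each statement's English description precedes it below -/
import Mathlib

section
/- Assume Assumption 3.3 holds for v, let b > 0, c₁ > c₂ > 0, and fix 0 < s* < t* with Σ(s*,t*) positive definite. Let (θ₁, θ₂)^T = Σ(s*,t*)^{-1}(b + c₂t*, c₁s*)^T and define the path f*(r) = −θ₁Γ(−r, t*) − θ₂Γ(−r, s*) for r ∈ [−t*, 0]. Assume Ē(s*) − c₁s* > 0 and that for all s ∈ (0,t*): (Ē(s) − c₁s)·v̄(s*) ≤ Γ̄(s, s*)·(Ē(s*) − c₁s*) (condition (22)). Then f*(−s) − f*(−t*) ≥ b + c₂t* − c₁s for all s ∈ (0, t*); that is, the conditioned most probable path lies in the closure of the overflow set S^{t*}. -/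
open Set Matrix
noncomputable section

/-- Γ(u,w) = (v(u) + v(w) − v(|w−u|))/2, the covariance of the inputs over the last u and
the last w time units. -/
def Gam2 (v : ℝ → ℝ) (u w : ℝ) : ℝ := (v u + v w - v |w - u|) / 2

/-- The covariance matrix Σ(s,t): diagonal entries v(t), v(s), off-diagonal Γ(s,t). -/
def SigM (v : ℝ → ℝ) (s t : ℝ) : Matrix (Fin 2) (Fin 2) ℝ :=
  !![v t, Gam2 v s t; Gam2 v s t, v s]

/-- (θ₁, θ₂)ᵀ = Σ(s*,t*)⁻¹ (b + c₂t*, c₁s*)ᵀ. -/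
def theta (b c₁ c₂ : ℝ) (v : ℝ → ℝ) (sstar tstar : ℝ) : Fin 2 → ℝ :=
  (SigM v sstar tstar)⁻¹ *ᵥ ![b + c₂ * tstar, c₁ * sstar]

/-- The conditional mean Ē(s) = Γ(s,t*)(b + c₂t*)/v(t*). -/
def Ebar (b c₂ : ℝ) (v : ℝ → ℝ) (tstar s : ℝ) : ℝ :=
  Gam2 v s tstar * (b + c₂ * tstar) / v tstar

/-- The conditional variance v̄(s) = v(s) − Γ(s,t*)²/v(t*). -/
def vbar (v : ℝ → ℝ) (tstar s : ℝ) : ℝ := v s - (Gam2 v s tstar) ^ 2 / v tstar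

/-- The conditional covariance
Γ̄(s,s') = (v(s)+v(s')−v(|s−s'|))/2 − Γ(s,t*)Γ(s',t*)/v(t*). -/
def Gbar (v : ℝ → ℝ) (tstar s s' : ℝ) : ℝ :=
  (v s + v s' - v |s - s'|) / 2 - Gam2 v s tstar * Gam2 v s' tstar / v tstar

/-- The conditioned most probable path f*(r) = −θ₁Γ(−r,t*) − θ₂Γ(−r,s*). -/
def fstar (b c₁ c₂ : ℝ) (v : ℝ → ℝ) (sstar tstar r : ℝ) : ℝ :=
  -(theta b c₁ c₂ v sstar tstar 0) * Gam2 v (-r) tstar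
    - theta b c₁ c₂ v sstar tstar 1 * Gam2 v (-r) sstar

/-- Core of Theorem 3.11: under condition (22), the conditioned most probable path f*
satisfies f*(−s) − f*(−t*) ≥ b + c₂t* − c₁s for all s ∈ (0,t*), i.e. it lies in the
closure of the overflow set S^{t*}. -/
theorem thm_3_11_path (b c₁ c₂ : ℝ) (hb : 0 < b) (hc₂ : 0 < c₂) (hc : c₂ < c₁)
    (v : ℝ → ℝ) (hv0 : v 0 = 0) (hvpos : ∀ u > 0, 0 < v u)
    (hvcont : ContinuousOn v (Ici 0))
    (hC2 : ContDiffOn ℝ 2 (fun u => Real.sqrt (v u)) (Ici 0))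
    (hmono : StrictMonoOn (fun u => Real.sqrt (v u)) (Ici 0))
    (hconc : StrictConcaveOn ℝ (Ici 0) (fun u => Real.sqrt (v u)))
    (sstar tstar : ℝ) (hs : 0 < sstar) (hst : sstar < tstar)
    (hPD : (SigM v sstar tstar).PosDef)
    (hpos : 0 < Ebar b c₂ v tstar sstar - c₁ * sstar)
    (hcond : ∀ s ∈ Ioo (0 : ℝ) tstar,
      (Ebar b c₂ v tstar s - c₁ * s) * vbar v tstar sstar ≤
        Gbar v tstar s sstar * (Ebar b c₂ v tstar sstar - c₁ * sstar)) :
    ∀ s ∈ Ioo (0 : ℝ) tstar,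
      b + c₂ * tstar - c₁ * s ≤
        fstar b c₁ c₂ v sstar tstar (-s) - fstar b c₁ c₂ v sstar tstar (-tstar) := by
  intro s hsmem
  obtain ⟨hs0, hstt⟩ := hsmem
  have hT : 0 < v tstar := hvpos _ (hs.trans hst)
  have hTne : v tstar ≠ 0 := hT.ne'
  have hdetpos : 0 < (SigM v sstar tstar).det := hPD.det_pos
  have hdet2 : (SigM v sstar tstar).det
      = v tstar * v sstar - Gam2 v sstar tstar ^ 2 := by
    simp [SigM, Matrix.det_fin_two_of]; ring
  have hmul : SigM v sstar tstar *ᵥ theta b c₁ c₂ v sstar tstar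
      = ![b + c₂ * tstar, c₁ * sstar] := by
    rw [theta, Matrix.mulVec_mulVec,
      Matrix.mul_nonsing_inv _ (isUnit_iff_ne_zero.mpr hdetpos.ne'), Matrix.one_mulVec]
  have eq1 : v tstar * theta b c₁ c₂ v sstar tstar 0
      + Gam2 v sstar tstar * theta b c₁ c₂ v sstar tstar 1 = b + c₂ * tstar := by
    have h := congrFun hmul 0
    simpa [SigM, Matrix.mulVec, dotProduct, Fin.sum_univ_two] using h
  have eq2 : Gam2 v sstar tstar * theta b c₁ c₂ v sstar tstar 0
      + v sstar * theta b c₁ c₂ v sstar tstar 1 = c₁ * sstar := by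
    have h := congrFun hmul 1
    simpa [SigM, Matrix.mulVec, dotProduct, Fin.sum_univ_two] using h
  have h22 := hcond s ⟨hs0, hstt⟩
  rw [Ebar, Ebar, vbar, Gbar] at h22
  have hBsym : (v s + v sstar - v |s - sstar|) / 2 = Gam2 v s sstar := by
    rw [Gam2, abs_sub_comm]
  rw [hBsym] at h22
  set T := v tstar with hTdef
  set S := v sstar with hSdef
  set G := Gam2 v sstar tstar with hGdef
  set A := Gam2 v s tstar with hAdef
  set Bq := Gam2 v s sstar with hBdef
  set θ₀ := theta b c₁ c₂ v sstar tstar 0 with hθ₀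
  set θ₁ := theta b c₁ c₂ v sstar tstar 1 with hθ₁
  have hD : 0 < S * T - G ^ 2 := by
    rw [hdet2] at hdetpos; linarith
  -- clear denominators in the condition (22)
  have key : (A * (b + c₂ * tstar) - c₁ * s * T) * (S * T - G ^ 2)
      ≤ (Bq * T - A * G) * (G * (b + c₂ * tstar) - c₁ * sstar * T) := by
    have h := mul_le_mul_of_nonneg_right h22 (sq_nonneg T)
    have e1 : (A * (b + c₂ * tstar) / T - c₁ * s) * (S - G ^ 2 / T) * T ^ 2
        = (A * (b + c₂ * tstar) - c₁ * s * T) * (S * T - G ^ 2) := by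
      field_simp
    have e2 : (Bq - A * G / T) * (G * (b + c₂ * tstar) / T - c₁ * sstar) * T ^ 2
        = (Bq * T - A * G) * (G * (b + c₂ * tstar) - c₁ * sstar * T) := by
      field_simp
    rw [e1, e2] at h
    exact h
  rw [← eq1, ← eq2] at key
  have key2 : (A * θ₀ + Bq * θ₁ - c₁ * s) * ((S * T - G ^ 2) * T) ≤ 0 := by
    nlinarith [key]
  have h1 : A * θ₀ + Bq * θ₁ ≤ c₁ * s := by
    nlinarith [key2, mul_pos hD hT]
  have hGtt : Gam2 v tstar tstar = T := by
    simp [Gam2, hv0, hTdef]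
  have hGts : Gam2 v tstar sstar = G := by
    rw [hGdef, Gam2, Gam2, abs_sub_comm]; ring
  simp only [fstar, neg_neg, hGtt, hGts, ← hθ₀, ← hθ₁, ← hAdef, ← hBdef]
  linarith [eq1, h1]

end
end

section
/- Assume the setup of condition (22): Assumption 3.3 holds for v (in particular v is C² on [0,∞)), b > 0, c₁ > c₂ > 0, 0 < s* < t*, Σ(s*,t*) is positive definite, (θ₁, θ₂)^T = Σ(s*,t*)^{-1}(b + c₂t*, c₁s*)^T, Ē(s*) − c₁s* > 0, and (Ē(s) − c₁s)·v̄(s*) ≤ Γ̄(s, s*)·(Ē(s*) − c₁s*) for all s ∈ (0, t*). Then necessarily θ₁·(v''(t* − s*) − v''(s*)) + θ₂·(v''(0) − v''(s*)) ≥ 0. -/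
open Set Matrix
open Filter Topology
noncomputable section

lemma tendsto_abs_sub' (a : ℝ) : Tendsto (fun x : ℝ => |x - a|) (𝓝[≠] a) (𝓝[>] 0) := by
  apply tendsto_nhdsWithin_of_tendsto_nhds_of_eventually_within
  · have : Tendsto (fun x : ℝ => |x - a|) (𝓝 a) (𝓝 |a - a|) :=
      (continuous_abs.comp (continuous_id.sub continuous_const)).tendsto a
    simpa using this.mono_left nhdsWithin_le_nhds
  · filter_upwards [self_mem_nhdsWithin] with x hx
    exact abs_pos.2 (sub_ne_zero.2 hx)

lemma hasDerivAt_comp_abs' (φ : ℝ → ℝ) (a : ℝ) (hφ0 : φ 0 = 0)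
    (h : Tendsto (slope φ 0) (𝓝[>] 0) (𝓝 0)) :
    HasDerivAt (fun x => φ |x - a|) 0 a := by
  rw [hasDerivAt_iff_tendsto_slope]
  have hcomp : Tendsto (fun x => slope φ 0 |x - a|) (𝓝[≠] a) (𝓝 0) :=
    h.comp (tendsto_abs_sub' a)
  apply squeeze_zero_norm' _ (by simpa using hcomp.abs)
  filter_upwards [self_mem_nhdsWithin] with x hx
  have h1 : slope (fun x => φ |x - a|) a x = φ |x - a| / (x - a) := by
    rw [slope_def_field]; simp [hφ0]
  have h2 : slope φ 0 |x - a| = φ |x - a| / |x - a| := by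
    rw [slope_def_field]; simp [hφ0]
  rw [h1, h2]
  simp only [Real.norm_eq_abs, abs_div, abs_abs]
  exact le_refl _

lemma hasDerivAt_signed_abs' (φ : ℝ → ℝ) (a L : ℝ) (hφ0 : φ 0 = 0)
    (h : Tendsto (slope φ 0) (𝓝[>] 0) (𝓝 L)) :
    HasDerivAt (fun x => if a ≤ x then φ (x - a) else -φ (a - x)) L a := by
  rw [hasDerivAt_iff_tendsto_slope]
  have hcomp : Tendsto (fun x => slope φ 0 |x - a|) (𝓝[≠] a) (𝓝 L) :=
    h.comp (tendsto_abs_sub' a)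
  apply hcomp.congr'
  filter_upwards [self_mem_nhdsWithin] with x hx
  have hxa : x - a ≠ 0 := sub_ne_zero.2 hx
  rw [slope_def_field, slope_def_field]
  rcases le_or_gt a x with hax | hax
  · rw [if_pos hax, if_pos le_rfl, abs_of_nonneg (sub_nonneg.2 hax)]
    simp [hφ0]
  · rw [if_neg (not_le.2 hax), if_pos le_rfl, abs_of_neg (sub_neg.2 hax)]
    simp only [sub_zero, hφ0, sub_self, sub_zero]
    rw [div_eq_div_iff (by linarith) (by linarith : x - a ≠ 0)]
    ring_nf

lemma aux_min' (f g : ℝ → ℝ) (a D : ℝ)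
    (hf : ∀ᶠ x in 𝓝 a, HasDerivAt f (g x) x)
    (hg : HasDerivAt g D a)
    (hmin : ∀ᶠ x in 𝓝 a, f a ≤ f x) : 0 ≤ D := by
  by_contra hD
  push_neg at hD
  have hmin' : IsLocalMin f a := hmin
  have hga : g a = 0 := by
    have h1 : deriv f a = 0 := hmin'.deriv_eq_zero
    have h2 : HasDerivAt f (g a) a := hf.self_of_nhds
    rw [h2.deriv] at h1; exact h1
  have hslope : Tendsto (slope g a) (𝓝[>] a) (𝓝 D) :=
    (hasDerivAt_iff_tendsto_slope.1 hg).mono_left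
      (nhdsWithin_mono a fun x hx => ne_of_gt hx)
  have hev : ∀ᶠ x in 𝓝[>] a, slope g a x < 0 := hslope.eventually (gt_mem_nhds hD)
  obtain ⟨u, hu, hIoo⟩ := mem_nhdsGT_iff_exists_Ioo_subset.1 hev
  obtain ⟨ε, hε, hball⟩ := Metric.eventually_nhds_iff.1 (hf.and hmin)
  set b := min u (a + ε) with hb
  have hab : a < b := lt_min hu (by linarith)
  set c := (a + b) / 2 with hc
  have hac : a < c := by simp only [hc]; linarith
  have hcb : c < b := by simp only [hc]; linarith
  have hsub : Icc a c ⊆ Metric.ball a ε := by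
    intro x hx
    have hbe : b ≤ a + ε := min_le_right _ _
    simp only [Metric.mem_ball, Real.dist_eq]
    rw [abs_lt]
    constructor <;> [linarith [hx.1]; linarith [hx.2]]
  have hcont : ContinuousOn f (Icc a c) := fun x hx =>
    ((hball (hsub hx)).1).continuousAt.continuousWithinAt
  have hanti : StrictAntiOn f (Icc a c) := by
    apply strictAntiOn_of_deriv_neg (convex_Icc a c) hcont
    intro x hx
    rw [interior_Icc] at hx
    have hxball : dist x a < ε := by
      rw [Real.dist_eq, abs_lt]
      have hbe : b ≤ a + ε := min_le_right _ _
      exact ⟨by linarith [hx.1], by linarith [hx.2]⟩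
    have hdx : HasDerivAt f (g x) x := (hball hxball).1
    rw [hdx.deriv]
    have hxIoo : x ∈ Ioo a u := ⟨hx.1, lt_of_lt_of_le (lt_trans hx.2 hcb) (min_le_left _ _)⟩
    have hsx : slope g a x < 0 := hIoo hxIoo
    rw [show slope g a x = g x / (x - a) by rw [slope_def_field, hga]; ring_nf] at hsx
    have hxa : 0 < x - a := sub_pos.2 hx.1
    rcases div_neg_iff.1 hsx with h | h
    · linarith [h.2]
    · exact h.1
  have hfc : f c < f a := hanti (left_mem_Icc.2 hac.le) (right_mem_Icc.2 hac.le) hac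
  have hcball : dist c a < ε := by
    rw [Real.dist_eq, abs_lt]
    have hbe : b ≤ a + ε := min_le_right _ _
    exact ⟨by linarith, by linarith⟩
  exact absurd ((hball hcball).2) (not_le.2 hfc)

lemma core' (v v' v'' : ℝ → ℝ) (s₀ t q C K : ℝ) (hs : 0 < s₀) (hst : s₀ < t)
    (hv0 : v 0 = 0) (hv'0 : v' 0 = 0)
    (hvd : ∀ u, 0 < u → HasDerivAt v (v' u) u)
    (hvd2 : ∀ u, 0 < u → HasDerivAt v' (v'' u) u)
    (hsl1 : Tendsto (slope v 0) (𝓝[>] 0) (𝓝 0))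
    (hsl2 : Tendsto (slope v' 0) (𝓝[>] 0) (𝓝 (v'' 0)))
    (hmin : ∀ x ∈ Ioo (0:ℝ) t,
      q/2*(v s₀ + v s₀ - v |s₀ - s₀|) - C/2*(v s₀ + v t - v (t - s₀)) + K*s₀ ≤
      q/2*(v x + v s₀ - v |x - s₀|) - C/2*(v x + v t - v (t - x)) + K*x) :
    0 ≤ q/2*(v'' s₀ - v'' 0) - C/2*(v'' s₀ - v'' (t - s₀)) := by
  set w : ℝ → ℝ := fun x => if s₀ ≤ x then v' (x - s₀) else -v' (s₀ - x) with hw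
  set G : ℝ → ℝ := fun x =>
    q/2*(v x + v s₀ - v |x - s₀|) - C/2*(v x + v t - v (t - x)) + K*x with hGdef
  set G' : ℝ → ℝ := fun x =>
    q/2*(v' x - w x) - C/2*(v' x + v' (t - x)) + K with hG'def
  have hwd : ∀ x, x ≠ s₀ → HasDerivAt (fun y => v |y - s₀|) (w x) x := by
    intro x hx
    rcases lt_or_gt_of_ne hx with hlt | hgt
    · have h1 : HasDerivAt (fun y => v (s₀ - y)) (-v' (s₀ - x)) x := by
        simpa using (HasDerivAt.comp_const_sub s₀ x (hvd (s₀ - x) (by linarith)))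
      have hwx : w x = -v' (s₀ - x) := if_neg (not_le.2 hlt)
      rw [hwx]
      apply h1.congr_of_eventuallyEq
      filter_upwards [Iio_mem_nhds hlt] with y hy
      rw [abs_of_neg (sub_neg.2 hy), neg_sub]
    · have h1 : HasDerivAt (fun y => v (y - s₀)) (v' (x - s₀)) x := by
        simpa using (HasDerivAt.comp_sub_const x s₀ (hvd (x - s₀) (by linarith)))
      have hwx : w x = v' (x - s₀) := if_pos hgt.le
      rw [hwx]
      apply h1.congr_of_eventuallyEq
      filter_upwards [Ioi_mem_nhds hgt] with y hy
      rw [abs_of_pos (sub_pos.2 hy)]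
  have hG : ∀ x ∈ Ioo (0:ℝ) t, HasDerivAt G (G' x) x := by
    intro x hx
    have h1 : HasDerivAt v (v' x) x := hvd x hx.1
    have h3 : HasDerivAt (fun y => v (t - y)) (-v' (t - x)) x := by
      simpa using (HasDerivAt.comp_const_sub t x (hvd (t - x) (by linarith [hx.2])))
    have h2 : HasDerivAt (fun y => v |y - s₀|) (w x) x := by
      rcases eq_or_ne x s₀ with rfl | hne
      · have hws : w x = 0 := by rw [hw]; simp [hv'0]
        rw [hws]
        exact hasDerivAt_comp_abs' v x hv0 hsl1
      · exact hwd x hne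
    have hraw : HasDerivAt G
        (q/2*(v' x - w x) - C/2*(v' x - -v' (t - x)) + K*1) x := by
      exact ((((h1.add_const (v s₀)).sub h2).const_mul (q/2)).sub
        (((h1.add_const (v t)).sub h3).const_mul (C/2))).add ((hasDerivAt_id x).const_mul K)
    have heq : q/2*(v' x - w x) - C/2*(v' x - -v' (t - x)) + K*1 = G' x := by
      rw [hG'def]; ring
    rwa [heq] at hraw
  have hG' : HasDerivAt G' (q/2*(v'' s₀ - v'' 0) - C/2*(v'' s₀ - -(-v'' (t - s₀)))) s₀ := by
    have h1 : HasDerivAt v' (v'' s₀) s₀ := hvd2 s₀ hs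
    have h3 : HasDerivAt (fun y => v' (t - y)) (-v'' (t - s₀)) s₀ := by
      simpa using (HasDerivAt.comp_const_sub t s₀ (hvd2 (t - s₀) (by linarith)))
    have hW : HasDerivAt w (v'' 0) s₀ := hasDerivAt_signed_abs' v' s₀ (v'' 0) hv'0 hsl2
    have hraw : HasDerivAt G'
        (q/2*(v'' s₀ - v'' 0) - C/2*(v'' s₀ + -v'' (t - s₀))) s₀ :=
      ((((h1.sub hW).const_mul (q/2)).sub
        ((h1.add h3).const_mul (C/2))).add_const K)
    have heq : q/2*(v'' s₀ - v'' 0) - C/2*(v'' s₀ + -v'' (t - s₀)) =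
        q/2*(v'' s₀ - v'' 0) - C/2*(v'' s₀ - -(-v'' (t - s₀))) := by ring
    rwa [heq] at hraw
  have hIoo : Ioo (0:ℝ) t ∈ 𝓝 s₀ := Ioo_mem_nhds hs hst
  have hD : 0 ≤ q/2*(v'' s₀ - v'' 0) - C/2*(v'' s₀ - -(-v'' (t - s₀))) := by
    apply aux_min' G G' s₀
    · filter_upwards [hIoo] with x hx
      exact hG x hx
    · exact hG'
    · filter_upwards [hIoo] with x hx
      exact hmin x hx
  linarith [hD]

/-- Lemma 3.12 / condition (24): condition (22) necessarily implies
θ₁(v''(t*−s*) − v''(s*)) + θ₂(v''(0) − v''(s*)) ≥ 0. -/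
theorem lemma_3_12 (b c₁ c₂ : ℝ) (hb : 0 < b) (hc₂ : 0 < c₂) (hc : c₂ < c₁)
    (v v' v'' : ℝ → ℝ) (hv0 : v 0 = 0) (hvpos : ∀ u > 0, 0 < v u)
    (hvcont : ContinuousOn v (Ici 0))
    (hC2 : ContDiffOn ℝ 2 (fun u => Real.sqrt (v u)) (Ici 0))
    (hmono : StrictMonoOn (fun u => Real.sqrt (v u)) (Ici 0))
    (hconc : StrictConcaveOn ℝ (Ici 0) (fun u => Real.sqrt (v u)))
    (hderiv : ∀ u ∈ Ici (0 : ℝ), HasDerivWithinAt v (v' u) (Ici 0) u)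
    (hderiv2 : ∀ u ∈ Ici (0 : ℝ), HasDerivWithinAt v' (v'' u) (Ici 0) u)
    (sstar tstar : ℝ) (hs : 0 < sstar) (hst : sstar < tstar)
    (hPD : (SigM v sstar tstar).PosDef)
    (hpos : 0 < Ebar b c₂ v tstar sstar - c₁ * sstar)
    (hcond : ∀ s ∈ Ioo (0 : ℝ) tstar,
      (Ebar b c₂ v tstar s - c₁ * s) * vbar v tstar sstar ≤
        Gbar v tstar s sstar * (Ebar b c₂ v tstar sstar - c₁ * sstar)) :
    0 ≤ theta b c₁ c₂ v sstar tstar 0 * (v'' (tstar - sstar) - v'' sstar) +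
        theta b c₁ c₂ v sstar tstar 1 * (v'' 0 - v'' sstar) := by
  have hts : 0 < tstar := hs.trans hst
  have hvt : 0 < v tstar := hvpos _ hts
  have hvs : 0 < v sstar := hvpos _ hs
  -- determinant positivity
  have hdet : 0 < v tstar * v sstar - Gam2 v sstar tstar * Gam2 v sstar tstar := by
    have h := hPD.det_pos
    rwa [show (SigM v sstar tstar).det
        = v tstar * v sstar - Gam2 v sstar tstar * Gam2 v sstar tstar from by
      simp [SigM, Matrix.det_fin_two_of]] at h
  have hVpos : 0 < vbar v tstar sstar := by
    have : vbar v tstar sstar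
        = (v tstar * v sstar - Gam2 v sstar tstar * Gam2 v sstar tstar) / v tstar := by
      rw [vbar]; field_simp
    rw [this]
    exact div_pos hdet hvt
  -- v' 0 = 0
  have hvnn : ∀ y ∈ Ici (0:ℝ), 0 ≤ v y := by
    intro y hy
    rcases eq_or_lt_of_le (mem_Ici.1 hy) with h | h
    · rw [← h, hv0]
    · exact (hvpos y h).le
  have hv'0 : v' 0 = 0 := by
    have hgd : HasDerivWithinAt (fun u => Real.sqrt (v u))
        (derivWithin (fun u => Real.sqrt (v u)) (Ici 0) 0) (Ici 0) 0 :=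
      ((hC2.differentiableOn (by norm_num)) 0 self_mem_Ici).hasDerivWithinAt
    have hsq := hgd.mul hgd
    have hveq : HasDerivWithinAt v 0 (Ici 0) 0 := by
      have hcg : HasDerivWithinAt v
          (derivWithin (fun u => Real.sqrt (v u)) (Ici 0) 0 * Real.sqrt (v 0) +
            Real.sqrt (v 0) * derivWithin (fun u => Real.sqrt (v u)) (Ici 0) 0) (Ici 0) 0 := by
        apply hsq.congr
        · intro y hy
          exact (Real.mul_self_sqrt (hvnn y hy)).symm
        · exact (Real.mul_self_sqrt (hvnn 0 self_mem_Ici)).symm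
      simpa [hv0, Real.sqrt_zero] using hcg
    have h1 := (hderiv 0 self_mem_Ici).derivWithin (uniqueDiffOn_Ici 0 0 self_mem_Ici)
    have h2 := hveq.derivWithin (uniqueDiffOn_Ici 0 0 self_mem_Ici)
    rw [← h1]; exact h2
  -- slope limits at 0
  have hsl1 : Tendsto (slope v 0) (𝓝[>] 0) (𝓝 0) := by
    have h := hasDerivWithinAt_iff_tendsto_slope.1 (hderiv 0 self_mem_Ici)
    rw [Ici_sdiff_left, hv'0] at h
    exact h
  have hsl2 : Tendsto (slope v' 0) (𝓝[>] 0) (𝓝 (v'' 0)) := by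
    have h := hasDerivWithinAt_iff_tendsto_slope.1 (hderiv2 0 self_mem_Ici)
    rwa [Ici_sdiff_left] at h
  -- interior derivatives
  have hvd : ∀ u, 0 < u → HasDerivAt v (v' u) u := fun u hu =>
    (hderiv u hu.le).hasDerivAt (Ici_mem_nhds hu)
  have hvd2 : ∀ u, 0 < u → HasDerivAt v' (v'' u) u := fun u hu =>
    (hderiv2 u hu.le).hasDerivAt (Ici_mem_nhds hu)
  -- abbreviations (as plain terms)
  have habs : |tstar - sstar| = tstar - sstar := abs_of_pos (by linarith)
  -- the function equality F = G on Ioo 0 t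
  have hFG : ∀ x ∈ Ioo (0:ℝ) tstar,
      Gbar v tstar x sstar * (Ebar b c₂ v tstar sstar - c₁ * sstar)
        - (Ebar b c₂ v tstar x - c₁ * x) * vbar v tstar sstar =
      (Ebar b c₂ v tstar sstar - c₁ * sstar)/2*(v x + v sstar - v |x - sstar|)
        - (((Ebar b c₂ v tstar sstar - c₁ * sstar) * Gam2 v sstar tstar
            + (b + c₂ * tstar) * vbar v tstar sstar) / v tstar)/2
          *(v x + v tstar - v (tstar - x))
        + (c₁ * vbar v tstar sstar)*x := by
    intro x hx
    have habs2 : |tstar - x| = tstar - x := abs_of_pos (by linarith [hx.2])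
    simp only [Gbar, Ebar, vbar, Gam2, habs, habs2]
    field_simp
    ring
  -- F sstar = 0
  have hFs0 : Gbar v tstar sstar sstar * (Ebar b c₂ v tstar sstar - c₁ * sstar)
      - (Ebar b c₂ v tstar sstar - c₁ * sstar) * vbar v tstar sstar = 0 := by
    have hGb : Gbar v tstar sstar sstar = vbar v tstar sstar := by
      simp only [Gbar, vbar, sub_self, abs_zero, hv0]
      ring
    rw [hGb]; ring
  -- the minimum condition for core'
  have hmin : ∀ x ∈ Ioo (0:ℝ) tstar,
      (Ebar b c₂ v tstar sstar - c₁ * sstar)/2*(v sstar + v sstar - v |sstar - sstar|)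
        - (((Ebar b c₂ v tstar sstar - c₁ * sstar) * Gam2 v sstar tstar
            + (b + c₂ * tstar) * vbar v tstar sstar) / v tstar)/2
          *(v sstar + v tstar - v (tstar - sstar))
        + (c₁ * vbar v tstar sstar)*sstar ≤
      (Ebar b c₂ v tstar sstar - c₁ * sstar)/2*(v x + v sstar - v |x - sstar|)
        - (((Ebar b c₂ v tstar sstar - c₁ * sstar) * Gam2 v sstar tstar
            + (b + c₂ * tstar) * vbar v tstar sstar) / v tstar)/2
          *(v x + v tstar - v (tstar - x))
        + (c₁ * vbar v tstar sstar)*x := by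
    intro x hx
    rw [← hFG sstar ⟨hs, hst⟩, ← hFG x hx]
    have h1 := hcond x hx
    linarith [hFs0, sub_nonneg.2 h1]
  have hD := core' v v' v'' sstar tstar
    (Ebar b c₂ v tstar sstar - c₁ * sstar)
    (((Ebar b c₂ v tstar sstar - c₁ * sstar) * Gam2 v sstar tstar
        + (b + c₂ * tstar) * vbar v tstar sstar) / v tstar)
    (c₁ * vbar v tstar sstar)
    hs hst hv0 hv'0 hvd hvd2 hsl1 hsl2 hmin
  -- theta formulas
  have hθ0 : theta b c₁ c₂ v sstar tstar 0 =
      (v sstar * (b + c₂ * tstar) - Gam2 v sstar tstar * (c₁ * sstar)) /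
        (v tstar * v sstar - Gam2 v sstar tstar * Gam2 v sstar tstar) := by
    simp [theta, SigM, Matrix.inv_def, Matrix.adjugate_fin_two_of, Matrix.det_fin_two_of,
      Matrix.mulVec, dotProduct, Fin.sum_univ_two, Ring.inverse_eq_inv', div_eq_mul_inv]
    ring
  have hθ1 : theta b c₁ c₂ v sstar tstar 1 =
      (v tstar * (c₁ * sstar) - Gam2 v sstar tstar * (b + c₂ * tstar)) /
        (v tstar * v sstar - Gam2 v sstar tstar * Gam2 v sstar tstar) := by
    simp [theta, SigM, Matrix.inv_def, Matrix.adjugate_fin_two_of, Matrix.det_fin_two_of,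
      Matrix.mulVec, dotProduct, Fin.sum_univ_two, Ring.inverse_eq_inv', div_eq_mul_inv]
    ring
  -- final algebra
  have hvtne : v tstar ≠ 0 := hvt.ne'
  have hdetne : v tstar * v sstar - Gam2 v sstar tstar * Gam2 v sstar tstar ≠ 0 := hdet.ne'
  have key : theta b c₁ c₂ v sstar tstar 0 * (v'' (tstar - sstar) - v'' sstar) +
      theta b c₁ c₂ v sstar tstar 1 * (v'' 0 - v'' sstar) =
      2 * ((Ebar b c₂ v tstar sstar - c₁ * sstar)/2*(v'' sstar - v'' 0)
        - (((Ebar b c₂ v tstar sstar - c₁ * sstar) * Gam2 v sstar tstar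
            + (b + c₂ * tstar) * vbar v tstar sstar) / v tstar)/2
          *(v'' sstar - v'' (tstar - sstar))) * v tstar /
        (v tstar * v sstar - Gam2 v sstar tstar * Gam2 v sstar tstar) := by
    rw [hθ0, hθ1]
    simp only [Ebar, vbar]
    field_simp
    ring
  rw [key]
  apply div_nonneg _ hdet.le
  apply mul_nonneg _ hvt.le
  linarith [hD]

end
end
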